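/- Let p be a prime, n ≥ 1, let x_0 < x_1 < ... < x_{p^n−1} be the p^n fixed points of the n-fold iterate g_p^n, and let α be a generator of the multiplicative group of the finite field F_{p^n}. Define B_α on the fixed points by B_α(x_0) = 0 and B_α(x_k) = α^{π_{p^n}(k)} for 1 ≤ k ≤ p^n − 1. Then B_α is a bijection from {x ∈ [0,1] : g_p^n(x) = x} onto F_{p^n}, and (B_α(x_k))^p = B_α(g_p(x_k)) for every 0 ≤ k ≤ p^n − 1. -/

import Mathlib

/-- The continuous piecewise linear map `g_p : [0,1] → [0,1]` that goes up and down
`p` times: on `[k/p, (k+1)/p]` it is `x ↦ p·x − k` for `k` even and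
`x ↦ k + 1 − p·x` for `k` odd. -/
noncomputable def gp (p : ℕ) (x : ℝ) : ℝ :=
  if Even ⌊(p : ℝ) * x⌋ then (p : ℝ) * x - ⌊(p : ℝ) * x⌋
  else (⌊(p : ℝ) * x⌋ : ℝ) + 1 - (p : ℝ) * x

/-- The permutation `π_{p^n}` of `{0, …, p^n − 1}`: `π_{p^1}` is the identity, and for
`a·p^{n−1} ≤ k < (a+1)·p^{n−1}`, `π_{p^n}(k) = a·p^{n−1} + π_{p^{n−1}}(k − a·p^{n−1})`
if `a` is even, and `π_{p^n}(k) = a·p^{n−1} + π_{p^{n−1}}(p^{n−1} − (k − a·p^{n−1}) − 1)`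
if `a` is odd. -/
def piPow (p : ℕ) : ℕ → ℕ → ℕ
  | 0, k => k
  | n + 1, k =>
    if Even (k / p ^ n) then k / p ^ n * p ^ n + piPow p n (k % p ^ n)
    else k / p ^ n * p ^ n + piPow p n (p ^ n - k % p ^ n - 1)

/-- Theorem: with `x_0 < x_1 < ⋯ < x_{p^n−1}` the fixed points of `g_p^n` and `α` a
generator of the multiplicative group of `F_{p^n}`, the map `B_α` with `B_α(x_0) = 0`
and `B_α(x_k) = α^{π_{p^n}(k)}` for `k ≥ 1` is a bijection onto `F_{p^n}` and satisfies
`(B_α(x_k))^p = B_α(g_p(x_k))` for every fixed point `x_k`. -/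
lemma piPow_lt (p : ℕ) (hp : 1 ≤ p) : ∀ n k, k < p ^ n → piPow p n k < p ^ n := by
  intro n
  induction n with
  | zero => intro k hk; simpa [piPow] using hk
  | succ n ih =>
    intro k hk
    have hM : 0 < p ^ n := Nat.pow_pos hp
    have ha : k / p ^ n < p := by
      rw [Nat.div_lt_iff_lt_mul hM]
      calc k < p ^ (n+1) := hk
        _ = p * p ^ n := by ring
    have hr : k % p ^ n < p ^ n := Nat.mod_lt _ hM
    have key : ∀ s, s < p ^ n → k / p ^ n * p ^ n + piPow p n s < p ^ (n+1) := by
      intro s hs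
      have h2 := ih s hs
      calc k / p ^ n * p ^ n + piPow p n s < k / p ^ n * p ^ n + p ^ n := by omega
        _ = (k / p ^ n + 1) * p ^ n := by ring
        _ ≤ p * p ^ n := Nat.mul_le_mul_right _ (by omega)
        _ = p ^ (n+1) := by ring
    rw [piPow]
    split
    · exact key _ hr
    · exact key _ (by generalize p ^ n = M at *; omega)

lemma piPow_zero (p : ℕ) : ∀ n, piPow p n 0 = 0 := by
  intro n
  induction n with
  | zero => rfl
  | succ n ih => rw [piPow]; simp [Nat.zero_div, Nat.zero_mod, ih]

/-- structure lemma: value of piPow at level n+1 -/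
lemma piPow_succ_eq (p n k : ℕ) :
    piPow p (n+1) k = k / p ^ n * p ^ n
      + piPow p n (if Even (k / p ^ n) then k % p ^ n else p ^ n - k % p ^ n - 1) := by
  rw [piPow]; split <;> simp [*]

lemma piPow_succ_div (p : ℕ) (hp : 1 ≤ p) (n k : ℕ) :
    piPow p (n+1) k / p ^ n = k / p ^ n := by
  have hM : 0 < p ^ n := Nat.pow_pos hp
  have hs : (if Even (k / p ^ n) then k % p ^ n else p ^ n - k % p ^ n - 1) < p ^ n := by
    have := Nat.mod_lt k hM
    split <;> (generalize p ^ n = M at *; omega)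
  have hlt := piPow_lt p hp n _ hs
  rw [piPow_succ_eq, mul_comm, Nat.mul_add_div hM, Nat.div_eq_of_lt hlt, add_zero]

lemma piPow_succ_mod (p : ℕ) (hp : 1 ≤ p) (n k : ℕ) :
    piPow p (n+1) k % p ^ n
      = piPow p n (if Even (k / p ^ n) then k % p ^ n else p ^ n - k % p ^ n - 1) := by
  have hM : 0 < p ^ n := Nat.pow_pos hp
  have hs : (if Even (k / p ^ n) then k % p ^ n else p ^ n - k % p ^ n - 1) < p ^ n := by
    have := Nat.mod_lt k hM
    split <;> (generalize p ^ n = M at *; omega)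
  have hlt := piPow_lt p hp n _ hs
  rw [piPow_succ_eq, mul_comm, Nat.mul_add_mod, Nat.mod_eq_of_lt hlt]

lemma piPow_inj (p : ℕ) (hp : 1 ≤ p) :
    ∀ n k l, k < p ^ n → l < p ^ n → piPow p n k = piPow p n l → k = l := by
  intro n
  induction n with
  | zero => intro k l _ _ h; simpa [piPow] using h
  | succ n ih =>
    intro k l hk hl h
    have hM : 0 < p ^ n := Nat.pow_pos hp
    have hdiv : k / p ^ n = l / p ^ n := by
      rw [← piPow_succ_div p hp n k, ← piPow_succ_div p hp n l, h]
    have hmod := h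
    have h1 := piPow_succ_mod p hp n k
    have h2 := piPow_succ_mod p hp n l
    rw [h] at h1
    rw [h1, hdiv] at h2
    have hrk := Nat.mod_lt k hM
    have hrl := Nat.mod_lt l hM
    by_cases he : Even (l / p ^ n)
    · rw [if_pos he, if_pos he] at h2
      have := ih _ _ (Nat.mod_lt k hM) (Nat.mod_lt l hM) h2
      have ek := Nat.div_add_mod k (p ^ n)
      have el := Nat.div_add_mod l (p ^ n)
      rw [hdiv, this] at ek
      omega
    · rw [if_neg he, if_neg he] at h2
      have := ih _ _ (by generalize p ^ n = M at *; omega) (by generalize p ^ n = M at *; omega) h2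
      have ek := Nat.div_add_mod k (p ^ n)
      have el := Nat.div_add_mod l (p ^ n)
      rw [hdiv] at ek
      generalize p ^ n = M at *
      omega

lemma piPow_shift (p : ℕ) (hp : 1 ≤ p) :
    ∀ n s b, s < p ^ n → b < p →
      piPow p (n+1) (p * s + b) = p * piPow p n s + (if Odd s then p - 1 - b else b) := by
  intro n
  induction n with
  | zero =>
    intro s b hs hb
    rw [pow_zero] at hs
    have hs0 : s = 0 := by omega
    subst hs0
    have h1 : (p * 0 + b) / p ^ 0 = b := by simp
    have h2 : (p * 0 + b) % p ^ 0 = 0 := by simp [Nat.mod_one]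
    rw [piPow_succ_eq, h1, h2, pow_zero]
    simp [piPow]
  | succ n ih =>
    intro s b hs hb
    have hM : 0 < p ^ n := Nat.pow_pos hp
    obtain ⟨a, r, hr_lt, hsar⟩ : ∃ a r, r < p ^ n ∧ s = a * p ^ n + r :=
      ⟨s / p ^ n, s % p ^ n, Nat.mod_lt _ hM, by
        rw [mul_comm]; exact (Nat.div_add_mod s (p ^ n)).symm⟩
    have ha : s / p ^ n = a := by
      rw [hsar, mul_comm, Nat.mul_add_div hM, Nat.div_eq_of_lt hr_lt, add_zero]
    have hrm : s % p ^ n = r := by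
      rw [hsar, mul_comm, Nat.mul_add_mod, Nat.mod_eq_of_lt hr_lt]
    have hb1 : b ≤ p - 1 := by omega
    have e0 : p ^ (n+1) = p * p ^ n := by ring
    have ea : a < p := by
      rw [← ha, Nat.div_lt_iff_lt_mul hM]
      calc s < p ^ (n+1) := hs
        _ = p * p ^ n := e0
    -- decomposition of p*s+b at level n+1
    have hdecomp : p * s + b = a * p ^ (n+1) + (p * r + b) := by
      rw [hsar, e0]; ring
    have hsub_lt : p * r + b < p ^ (n+1) := by
      have e2 : p * (r+1) ≤ p * p ^ n := Nat.mul_le_mul_left p hr_lt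
      have e1 : p * (r+1) = p * r + p := by ring
      rw [e0]; omega
    have hdiv : (p * s + b) / p ^ (n+1) = a := by
      rw [hdecomp, mul_comm, Nat.mul_add_div (by positivity), Nat.div_eq_of_lt hsub_lt, add_zero]
    have hmod : (p * s + b) % p ^ (n+1) = p * r + b := by
      rw [hdecomp, mul_comm, Nat.mul_add_mod, Nat.mod_eq_of_lt hsub_lt]
    rw [piPow_succ_eq p (n+1) (p*s+b), hdiv, hmod]
    rw [piPow_succ_eq p n s, ha, hrm]
    by_cases hea : Even a
    · rw [if_pos hea, if_pos hea]
      rw [ih r b hr_lt hb]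
      have hpar : Odd s ↔ Odd r := by
        obtain ⟨t, ht⟩ := hea
        have h2 : s = 2 * (t * p ^ n) + r := by rw [hsar, ht]; ring
        rw [Nat.odd_iff, Nat.odd_iff, h2]
        generalize t * p ^ n = Q at *
        omega
      have hif : (if Odd s then p - 1 - b else b) = (if Odd r then p - 1 - b else b) := by
        simp only [hpar]
      rw [hif, e0]
      ring
    · rw [if_neg hea, if_neg hea]
      have harg : p ^ (n+1) - (p * r + b) - 1 = p * (p ^ n - r - 1) + (p - 1 - b) := by
        have e2 : p * (r+1) ≤ p * p ^ n := Nat.mul_le_mul_left p hr_lt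
        have e1 : p * (r+1) = p * r + p := by ring
        have e3 : p * (p ^ n - r - 1) = p * p ^ n - p * (r+1) := by
          have h4 : p ^ n - r - 1 = p ^ n - (r+1) := Nat.sub_sub _ _ _
          rw [h4, Nat.mul_sub]
        rw [e0]
        omega
      rw [harg, ih (p ^ n - r - 1) (p - 1 - b) (by generalize p ^ n = M at hr_lt ⊢; omega) (by omega)]
      have hpar : Odd s ↔ ¬ Odd (p ^ n - r - 1) := by
        have hoa : Odd a := Nat.odd_iff.2 (by rw [Nat.even_iff] at hea; omega)
        obtain ⟨t, ht⟩ := hoa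
        have h2 : s = 2 * (t * p ^ n) + p ^ n + r := by rw [hsar, ht]; ring
        rw [Nat.odd_iff, Nat.odd_iff, h2]
        generalize t * p ^ n = Q at h2 ⊢
        generalize p ^ n = M at *
        omega
      have hif : (if Odd (p ^ n - r - 1) then p - 1 - (p - 1 - b) else p - 1 - b)
          = (if Odd s then p - 1 - b else b) := by
        by_cases ho : Odd s
        · rw [if_pos ho, if_neg (by tauto)]
        · rw [if_neg ho, if_pos (by tauto)]
          omega
      rw [hif, e0]
      ring

lemma gp_step (p : ℕ) (a : ℕ) (y : ℝ) (h1 : (a : ℝ) ≤ p * y) (h2 : (p : ℝ) * y ≤ a + 1) :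
    gp p y = if Even a then (p : ℝ) * y - a else (a : ℝ) + 1 - p * y := by
  rcases lt_or_eq_of_le h2 with hlt | heq
  · have hf : ⌊(p : ℝ) * y⌋ = (a : ℤ) := by
      rw [Int.floor_eq_iff]
      constructor
      · exact_mod_cast h1
      · push_cast
        exact_mod_cast hlt
    rw [gp, hf]
    by_cases he : Even a
    · rw [if_pos (by exact_mod_cast he), if_pos he]
      push_cast; ring
    · rw [if_neg (by exact_mod_cast he), if_neg he]
      push_cast; ring
  · have hf : ⌊(p : ℝ) * y⌋ = (a : ℤ) + 1 := by
      rw [heq]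
      exact_mod_cast Int.floor_intCast ((a : ℤ) + 1)
    rw [gp, hf]
    by_cases he : Even a
    · have : ¬ Even ((a : ℤ) + 1) := by
        simp [Int.even_add_one]; exact_mod_cast he
      rw [if_neg this, if_pos he]
      push_cast
      linarith
    · have : Even ((a : ℤ) + 1) := by
        rw [Int.even_add_one]; exact_mod_cast he
      rw [if_pos this, if_neg he]
      push_cast
      linarith

lemma gp_iter (p : ℕ) (hp : 1 ≤ p) :
    ∀ m (k : ℕ), k < p ^ m → ∀ y : ℝ, (k : ℝ) ≤ (p : ℝ) ^ m * y → (p : ℝ) ^ m * y ≤ k + 1 →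
      (gp p)^[m] y = if Even k then (p : ℝ) ^ m * y - k else (k : ℝ) + 1 - (p : ℝ) ^ m * y := by
  intro m
  induction m with
  | zero =>
    intro k hk y h1 h2
    rw [pow_zero] at hk
    have : k = 0 := by omega
    subst this
    simp
  | succ m ih =>
    intro k hk y h1 h2
    have hM : 0 < p ^ m := Nat.pow_pos hp
    have hMR : (0 : ℝ) < (p : ℝ) ^ m := by positivity
    have hpR : (0 : ℝ) < (p : ℝ) := by exact_mod_cast hp
    obtain ⟨a, r, hr_lt, hsar⟩ : ∃ a r, r < p ^ m ∧ k = a * p ^ m + r :=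
      ⟨k / p ^ m, k % p ^ m, Nat.mod_lt _ hM, by
        rw [mul_comm]; exact (Nat.div_add_mod k (p ^ m)).symm⟩
    have hcast : (k : ℝ) = (a : ℝ) * (p : ℝ) ^ m + (r : ℝ) := by
      rw [hsar]; push_cast; ring
    have hrR : (r : ℝ) ≤ (p : ℝ) ^ m - 1 := by
      have : (r : ℝ) + 1 ≤ (p : ℝ) ^ m := by exact_mod_cast hr_lt
      linarith
    have hstep1 : (a : ℝ) ≤ (p : ℝ) * y := by
      have h1' : (a : ℝ) * (p : ℝ) ^ m ≤ ((p : ℝ) * y) * (p : ℝ) ^ m := by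
        have : (p : ℝ) ^ (m + 1) * y = ((p : ℝ) * y) * (p : ℝ) ^ m := by ring
        nlinarith [hcast, h1, (Nat.cast_nonneg r : (0:ℝ) ≤ (r:ℝ))]
      exact le_of_mul_le_mul_right h1' hMR
    have hstep2 : (p : ℝ) * y ≤ (a : ℝ) + 1 := by
      have h2' : ((p : ℝ) * y) * (p : ℝ) ^ m ≤ ((a : ℝ) + 1) * (p : ℝ) ^ m := by
        have e : (p : ℝ) ^ (m + 1) * y = ((p : ℝ) * y) * (p : ℝ) ^ m := by ring
        nlinarith [hcast, h2, hrR]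
      exact le_of_mul_le_mul_right h2' hMR
    rw [Function.iterate_succ_apply, gp_step p a y hstep1 hstep2]
    by_cases hea : Even a
    · rw [if_pos hea]
      have hb1 : (r : ℝ) ≤ (p : ℝ) ^ m * ((p : ℝ) * y - (a : ℝ)) := by
        have : (p : ℝ) ^ m * ((p : ℝ) * y - a) = (p : ℝ) ^ (m+1) * y - a * (p : ℝ) ^ m := by
          ring
        rw [this]; rw [hcast] at h1; linarith
      have hb2 : (p : ℝ) ^ m * ((p : ℝ) * y - (a : ℝ)) ≤ (r : ℝ) + 1 := by
        have : (p : ℝ) ^ m * ((p : ℝ) * y - a) = (p : ℝ) ^ (m+1) * y - a * (p : ℝ) ^ m := by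
          ring
        rw [this]; rw [hcast] at h2; linarith
      rw [ih r hr_lt _ hb1 hb2]
      have hkr : Even k ↔ Even r := by
        obtain ⟨t, ht⟩ := hea
        have h2 : k = 2 * (t * p ^ m) + r := by rw [hsar, ht]; ring
        rw [Nat.even_iff, Nat.even_iff, h2]
        generalize t * p ^ m = Q
        omega
      by_cases her : Even r
      · rw [if_pos her, if_pos (hkr.2 her), hcast]; push_cast; ring
      · rw [if_neg her, if_neg (fun h => her (hkr.1 h)), hcast]; push_cast; ring
    · rw [if_neg hea]
      have hr'c : ((p ^ m - r - 1 : ℕ) : ℝ) = (p : ℝ) ^ m - r - 1 := by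
        have h5 : p ^ m - r - 1 + (r + 1) = p ^ m := by
          generalize p ^ m = M at hr_lt ⊢; omega
        have h6 := congrArg (fun z : ℕ => (z : ℝ)) h5
        push_cast at h6
        linarith
      have hb1 : ((p ^ m - r - 1 : ℕ) : ℝ) ≤ (p : ℝ) ^ m * ((a : ℝ) + 1 - (p : ℝ) * y) := by
        rw [hr'c]
        have e : (p : ℝ) ^ m * ((a : ℝ) + 1 - (p : ℝ) * y)
            = (a : ℝ) * (p : ℝ) ^ m + (p : ℝ) ^ m - (p : ℝ) ^ (m+1) * y := by ring
        rw [e]; rw [hcast] at h2; linarith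
      have hb2 : (p : ℝ) ^ m * ((a : ℝ) + 1 - (p : ℝ) * y) ≤ ((p ^ m - r - 1 : ℕ) : ℝ) + 1 := by
        rw [hr'c]
        have e : (p : ℝ) ^ m * ((a : ℝ) + 1 - (p : ℝ) * y)
            = (a : ℝ) * (p : ℝ) ^ m + (p : ℝ) ^ m - (p : ℝ) ^ (m+1) * y := by ring
        rw [e]; rw [hcast] at h1; linarith
      rw [ih (p ^ m - r - 1) (by generalize p ^ m = M at hr_lt ⊢; omega) _ hb1 hb2]
      have hkr : Even k ↔ ¬ Even (p ^ m - r - 1) := by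
        have hoa : Odd a := Nat.odd_iff.2 (by rw [Nat.even_iff] at hea; omega)
        obtain ⟨t, ht⟩ := hoa
        have h2 : k = 2 * (t * p ^ m) + p ^ m + r := by rw [hsar, ht]; ring
        rw [Nat.even_iff, Nat.even_iff, h2]
        generalize t * p ^ m = Q at *
        generalize p ^ m = M at *
        omega
      by_cases her : Even (p ^ m - r - 1)
      · rw [if_pos her, if_neg (fun h => (hkr.1 h) her), hr'c, hcast]; push_cast; ring
      · rw [if_neg her, if_pos (hkr.2 her), hr'c, hcast]; push_cast; ring

noncomputable def Xp (p n k : ℕ) : ℝ :=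
  if Even k then (k : ℝ) / ((p : ℝ) ^ n - 1) else ((k : ℝ) + 1) / ((p : ℝ) ^ n + 1)

lemma Q_ge (p n : ℕ) (hp : 2 ≤ p) (hn : 1 ≤ n) : (2 : ℝ) ≤ (p : ℝ) ^ n := by
  have h1 : 2 ≤ p ^ n := le_trans hp (Nat.le_self_pow (by omega) p)
  exact_mod_cast h1

lemma Xp_bounds (p n : ℕ) (hp : 2 ≤ p) (hn : 1 ≤ n) (k : ℕ) (hk : k < p ^ n) :
    (k : ℝ) ≤ (p : ℝ) ^ n * Xp p n k ∧ (p : ℝ) ^ n * Xp p n k ≤ (k : ℝ) + 1 := by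
  have hQ := Q_ge p n hp hn
  have hkQ : (k : ℝ) + 1 ≤ (p : ℝ) ^ n := by exact_mod_cast hk
  have hk0 : (0 : ℝ) ≤ (k : ℝ) := Nat.cast_nonneg k
  rw [Xp]
  split
  · rw [← mul_div_assoc]
    constructor
    · rw [le_div_iff₀ (by linarith)]; nlinarith
    · rw [div_le_iff₀ (by linarith)]; nlinarith
  · rw [← mul_div_assoc]
    constructor
    · rw [le_div_iff₀ (by linarith)]; nlinarith
    · rw [div_le_iff₀ (by linarith)]; nlinarith

lemma Xp_Icc (p n : ℕ) (hp : 2 ≤ p) (hn : 1 ≤ n) (k : ℕ) (hk : k < p ^ n) : Xp p n k ∈ Set.Icc (0 : ℝ) 1 := by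
  have hQ := Q_ge p n hp hn
  have hkQ : (k : ℝ) + 1 ≤ (p : ℝ) ^ n := by exact_mod_cast hk
  have hk0 : (0 : ℝ) ≤ (k : ℝ) := Nat.cast_nonneg k
  rw [Xp]
  constructor
  · split
    · exact div_nonneg hk0 (by linarith)
    · positivity
  · split
    · rw [div_le_one (by linarith)]; linarith
    · rw [div_le_one (by linarith)]; linarith

lemma Xp_lt_succ (p n : ℕ) (hp : 2 ≤ p) (hn : 1 ≤ n) (k : ℕ) (hk : k + 1 < p ^ n) : Xp p n k < Xp p n (k + 1) := by
  have hQ := Q_ge p n hp hn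
  have hkQ : (k : ℝ) + 2 ≤ (p : ℝ) ^ n := by exact_mod_cast hk
  have hk0 : (0 : ℝ) ≤ (k : ℝ) := Nat.cast_nonneg k
  have h1 : Xp p n k < ((k : ℝ) + 1) / (p : ℝ) ^ n := by
    rw [Xp]
    split
    · rw [div_lt_div_iff₀ (by linarith) (by linarith)]; nlinarith
    · rw [div_lt_div_iff₀ (by linarith) (by linarith)]; nlinarith
  have h2 : ((k : ℝ) + 1) / (p : ℝ) ^ n ≤ Xp p n (k + 1) := by
    rw [Xp]
    push_cast
    split
    · rw [div_le_div_iff₀ (by linarith) (by linarith)]; nlinarith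
    · rw [div_le_div_iff₀ (by linarith) (by linarith)]; nlinarith
  linarith

lemma Xp_strictMono (p n : ℕ) (hp : 2 ≤ p) (hn : 1 ≤ n) : ∀ i j, i < j → j < p ^ n → Xp p n i < Xp p n j := by
  intro i j
  induction j with
  | zero => omega
  | succ j ihj =>
    intro hij hj
    rcases Nat.lt_or_ge i j with h | h
    · exact lt_trans (ihj h (by omega)) (Xp_lt_succ p n hp hn j hj)
    · have : i = j := by omega
      subst this
      exact Xp_lt_succ p n hp hn i hj


lemma Xp_fixed (p n : ℕ) (hp : 2 ≤ p) (hn : 1 ≤ n) (k : ℕ) (hk : k < p ^ n) :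
    (gp p)^[n] (Xp p n k) = Xp p n k := by
  have hQ := Q_ge p n hp hn
  have hkQ : (k : ℝ) + 1 ≤ (p : ℝ) ^ n := by exact_mod_cast hk
  have hb := Xp_bounds p n hp hn k hk
  rw [gp_iter p (by omega) n k hk _ hb.1 hb.2]
  have hne1 : (p : ℝ) ^ n - 1 ≠ 0 := by linarith
  have hne2 : (p : ℝ) ^ n + 1 ≠ 0 := by linarith
  by_cases he : Even k
  · rw [if_pos he]
    rw [Xp, if_pos he]
    rw [eq_div_iff hne1, sub_mul, mul_assoc, div_mul_cancel₀ _ hne1]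
    ring
  · rw [if_neg he]
    rw [Xp, if_neg he]
    rw [eq_div_iff hne2, sub_mul, mul_assoc, div_mul_cancel₀ _ hne2]
    ring

set_option maxHeartbeats 1000000 in
lemma gp_action (p n : ℕ) (hp : 2 ≤ p) (hn : 1 ≤ n) (k : ℕ) (hk : k < p ^ n) :
    ∃ k', k' < p ^ n ∧ (k' = 0 ↔ k = 0) ∧
      gp p (Xp p n k) = Xp p n k' ∧
      Nat.ModEq (p ^ n - 1) (p * piPow p n k) (piPow p n k') := by
  obtain ⟨m, rfl⟩ : ∃ m, n = m + 1 := ⟨n - 1, by omega⟩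
  have hp1 : 1 ≤ p := by omega
  have hM : 0 < p ^ m := Nat.pow_pos hp1
  have hMQ : 0 < p ^ (m+1) := Nat.pow_pos hp1
  obtain ⟨a, r, hr_lt, hsar⟩ : ∃ a r, r < p ^ m ∧ k = a * p ^ m + r :=
    ⟨k / p ^ m, k % p ^ m, Nat.mod_lt _ hM, by
      rw [mul_comm]; exact (Nat.div_add_mod k (p ^ m)).symm⟩
  have ha : k / p ^ m = a := by
    rw [hsar, mul_comm, Nat.mul_add_div hM, Nat.div_eq_of_lt hr_lt, add_zero]
  have hrm : k % p ^ m = r := by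
    rw [hsar, mul_comm, Nat.mul_add_mod, Nat.mod_eq_of_lt hr_lt]
  have ea : a < p := by
    rw [← ha, Nat.div_lt_iff_lt_mul hM]
    calc k < p ^ (m+1) := hk
      _ = p * p ^ m := by ring
  -- real number facts
  have hMR : (0 : ℝ) < (p : ℝ) ^ m := by positivity
  have hpR : (0 : ℝ) < (p : ℝ) := by exact_mod_cast hp1
  have hQR : (2 : ℝ) ≤ (p : ℝ) ^ (m+1) := Q_ge p (m+1) hp hn
  have hcast : (k : ℝ) = (a : ℝ) * (p : ℝ) ^ m + (r : ℝ) := by rw [hsar]; push_cast; ring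
  have hrR : (r : ℝ) + 1 ≤ (p : ℝ) ^ m := by exact_mod_cast hr_lt
  have hkQ : (k : ℝ) + 1 ≤ (p : ℝ) ^ (m+1) := by exact_mod_cast hk
  have hb := Xp_bounds p (m+1) hp hn k hk
  have hQe : (p : ℝ) ^ (m+1) = (p : ℝ) * (p : ℝ) ^ m := by ring
  have hstep1 : (a : ℝ) ≤ (p : ℝ) * Xp p (m+1) k := by
    have h1' : (a : ℝ) * (p : ℝ) ^ m ≤ ((p : ℝ) * Xp p (m+1) k) * (p : ℝ) ^ m := by
      nlinarith [hb.1, (Nat.cast_nonneg r : (0:ℝ) ≤ (r:ℝ))]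
    exact le_of_mul_le_mul_right h1' hMR
  have hstep2 : (p : ℝ) * Xp p (m+1) k ≤ (a : ℝ) + 1 := by
    have h2' : ((p : ℝ) * Xp p (m+1) k) * (p : ℝ) ^ m ≤ ((a : ℝ) + 1) * (p : ℝ) ^ m := by
      nlinarith [hb.2]
    exact le_of_mul_le_mul_right h2' hMR
  have hgp := gp_step p a _ hstep1 hstep2
  -- piPow structure at level m+1
  have hpik : piPow p (m+1) k = a * p ^ m
      + piPow p m (if Even a then r else p ^ m - r - 1) := by
    rw [piPow_succ_eq, ha, hrm]
  have hparm : a * p ^ m % 2 = a % 2 * (p ^ m % 2) % 2 := Nat.mul_mod a (p ^ m) 2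
  have hQ1 : (1 : ℕ) ≡ p ^ (m+1) [MOD p ^ (m+1) - 1] := by
    rw [Nat.modEq_iff_dvd' (by generalize p ^ (m+1) = Q at hMQ ⊢; omega)]
  -- the modular equation in final form
  have hfinal : ∀ S c, S < p ^ m → c < p →
      (if Odd S then p - 1 - c else c) = a →
      piPow p (m+1) k = a * p ^ m + piPow p m S →
      Nat.ModEq (p ^ (m+1) - 1) (p * piPow p (m+1) k) (piPow p (m+1) (p * S + c)) := by
    intro S c hS hc hflip hpik'
    rw [piPow_shift p hp1 m S c hS hc, hflip, hpik']
    have e1 : p * (a * p ^ m + piPow p m S) = a * p ^ (m+1) + p * piPow p m S := by ring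
    rw [e1]
    have h2 : a * 1 + p * piPow p m S ≡ a * p ^ (m+1) + p * piPow p m S
        [MOD p ^ (m+1) - 1] := Nat.ModEq.add_right _ (Nat.ModEq.mul_left a hQ1)
    have h3 : a * 1 + p * piPow p m S = p * piPow p m S + a := by ring
    rw [h3] at h2
    exact h2.symm
  by_cases hea : Even a <;> by_cases hek : Even k
  · -- a even, k even : k' = p * r + a, r even
    refine ⟨p * r + a, ?_, ?_, ?_, ?_⟩
    · calc p * r + a < p * r + p := by omega
        _ = p * (r + 1) := by ring
        _ ≤ p * p ^ m := Nat.mul_le_mul_left p hr_lt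
        _ = p ^ (m+1) := by ring
    · constructor
      · intro h
        have ha0 : a = 0 := by omega
        have hpr : p * r = 0 := by omega
        have hr0 : r = 0 := by
          rcases Nat.mul_eq_zero.1 hpr with h' | h'
          · omega
          · exact h'
        have hA : a * p ^ m = 0 := by rw [ha0]; ring
        omega
      · intro h
        rw [hsar] at h
        have hA : a * p ^ m = 0 := by omega
        have ha0 : a = 0 := by
          rcases Nat.mul_eq_zero.1 hA with h' | h'
          · exact h'
          · omega
        have hr0 : r = 0 := by omega
        rw [ha0, hr0]
        simp
    · have her : Even r := by
        have h1 : a % 2 = 0 := Nat.even_iff.1 hea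
        have h2 : k % 2 = 0 := Nat.even_iff.1 hek
        have h3 : a * p ^ m % 2 = 0 := by rw [Nat.mul_mod, h1]; simp
        rw [Nat.even_iff]
        omega
      have hek' : Even (p * r + a) := by
        have h4 : p * r % 2 = 0 := by rw [Nat.mul_mod, Nat.even_iff.1 her]; simp
        rw [Nat.even_iff]
        have h1 : a % 2 = 0 := Nat.even_iff.1 hea
        omega
      rw [hgp, if_pos hea, Xp, Xp, if_pos hek, if_pos hek']
      have hne : (p : ℝ) ^ (m+1) - 1 ≠ 0 := by linarith
      rw [eq_div_iff hne, sub_mul, mul_assoc, div_mul_cancel₀ _ hne]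
      push_cast
      linear_combination (p : ℝ) * hcast
    · apply hfinal r a hr_lt ea _ (by rw [hpik, if_pos hea])
      have hnodd : ¬ Odd r := by
        have h1 : a % 2 = 0 := Nat.even_iff.1 hea
        have h2 : k % 2 = 0 := Nat.even_iff.1 hek
        have h3 : a * p ^ m % 2 = 0 := by rw [Nat.mul_mod, h1]; simp
        rw [Nat.odd_iff]
        omega
      rw [if_neg hnodd]
  · -- a even, k odd : k' = p * r + (p - 1 - a), r odd
    have h1 : a % 2 = 0 := Nat.even_iff.1 hea
    have h2 : k % 2 = 1 := Nat.odd_iff.1 (Nat.odd_iff.2 (by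
      rw [Nat.even_iff] at hek; omega))
    have h3 : a * p ^ m % 2 = 0 := by rw [Nat.mul_mod, h1]; simp
    have her : r % 2 = 1 := by omega
    have h4 : p * r % 2 = p % 2 := by rw [Nat.mul_mod, her, mul_one]; exact Nat.mod_mod_of_dvd _ dvd_rfl
    have hc2 : ((p - 1 - a : ℕ) : ℝ) = (p : ℝ) - 1 - (a : ℝ) := by
      have h5 : p - 1 - a + (a + 1) = p := by omega
      have h6 := congrArg (fun z : ℕ => (z : ℝ)) h5
      push_cast at h6
      linarith
    have hk'o : (p * r + (p - 1 - a)) % 2 = 1 := by omega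
    refine ⟨p * r + (p - 1 - a), ?_, ?_, ?_, ?_⟩
    · calc p * r + (p - 1 - a) < p * r + p := by omega
        _ = p * (r + 1) := by ring
        _ ≤ p * p ^ m := Nat.mul_le_mul_left p hr_lt
        _ = p ^ (m+1) := by ring
    · omega
    · have hek' : ¬ Even (p * r + (p - 1 - a)) := by rw [Nat.even_iff]; omega
      rw [hgp, if_pos hea, Xp, Xp, if_neg hek, if_neg hek']
      have hne : (p : ℝ) ^ (m+1) + 1 ≠ 0 := by linarith
      rw [eq_div_iff hne, sub_mul, mul_assoc, div_mul_cancel₀ _ hne]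
      push_cast
      rw [hc2]
      linear_combination (p : ℝ) * hcast
    · apply hfinal r (p - 1 - a) hr_lt (by omega) _ (by rw [hpik, if_pos hea])
      have hodd : Odd r := Nat.odd_iff.2 her
      rw [if_pos hodd]
      omega
  · -- a odd, k even : k' = p * (p^m - r - 1) + (p - 1 - a)
    have h1 : a % 2 = 1 := Nat.odd_iff.1 (Nat.odd_iff.2 (by
      rw [Nat.even_iff] at hea; omega))
    have h2 : k % 2 = 0 := Nat.even_iff.1 hek
    have h3 : a * p ^ m % 2 = p ^ m % 2 := by rw [Nat.mul_mod, h1, one_mul]; exact Nat.mod_mod_of_dvd _ dvd_rfl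
    have hrS : r % 2 = p ^ m % 2 := by omega
    have hS_lt : p ^ m - r - 1 < p ^ m := by generalize p ^ m = M at hr_lt ⊢; omega
    have hSodd : (p ^ m - r - 1) % 2 = 1 := by
      generalize p ^ m = M at hr_lt hrS ⊢; omega
    have h4 : p * (p ^ m - r - 1) % 2 = p % 2 := by
      rw [Nat.mul_mod, hSodd, mul_one]; exact Nat.mod_mod_of_dvd _ dvd_rfl
    have hc2 : ((p - 1 - a : ℕ) : ℝ) = (p : ℝ) - 1 - (a : ℝ) := by
      have h5 : p - 1 - a + (a + 1) = p := by omega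
      have h6 := congrArg (fun z : ℕ => (z : ℝ)) h5
      push_cast at h6
      linarith
    have hSc : ((p ^ m - r - 1 : ℕ) : ℝ) = (p : ℝ) ^ m - 1 - (r : ℝ) := by
      have h5 : p ^ m - r - 1 + (r + 1) = p ^ m := by generalize p ^ m = M at hr_lt ⊢; omega
      have h6 := congrArg (fun z : ℕ => (z : ℝ)) h5
      push_cast at h6
      linarith
    have hk'e : (p * (p ^ m - r - 1) + (p - 1 - a)) % 2 = 0 := by omega
    refine ⟨p * (p ^ m - r - 1) + (p - 1 - a), ?_, ?_, ?_, ?_⟩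
    · calc p * (p ^ m - r - 1) + (p - 1 - a) < p * (p ^ m - r - 1) + p := by omega
        _ = p * (p ^ m - r - 1 + 1) := by ring
        _ ≤ p * p ^ m := Nat.mul_le_mul_left p (by generalize p ^ m = M at hr_lt ⊢; omega)
        _ = p ^ (m+1) := by ring
    · constructor
      · intro h
        have hca : p - 1 - a = 0 := by omega
        have hpS : p * (p ^ m - r - 1) = 0 := by omega
        have hS0 : p ^ m - r - 1 = 0 := by
          rcases Nat.mul_eq_zero.1 hpS with h' | h'
          · omega
          · exact h'
        exfalso
        generalize p ^ m = M at hr_lt hrS hS0 ⊢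
        omega
      · intro h
        rw [hsar] at h
        have hA : a * p ^ m = 0 := by omega
        exfalso
        have : 0 < p ^ m := Nat.pow_pos hp1
        rcases Nat.mul_eq_zero.1 hA with h' | h'
        · omega
        · omega
    · have hek' : Even (p * (p ^ m - r - 1) + (p - 1 - a)) := Nat.even_iff.2 hk'e
      rw [hgp, if_neg hea, Xp, Xp, if_pos hek, if_pos hek']
      have hne : (p : ℝ) ^ (m+1) - 1 ≠ 0 := by linarith
      rw [eq_div_iff hne, sub_mul, mul_assoc, div_mul_cancel₀ _ hne]
      push_cast
      rw [hc2, hSc]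
      linear_combination (- (p : ℝ)) * hcast
    · apply hfinal (p ^ m - r - 1) (p - 1 - a) hS_lt (by omega) _ (by rw [hpik, if_neg hea])
      rw [if_pos (Nat.odd_iff.2 hSodd)]
      omega
  · -- a odd, k odd : k' = p * (p^m - r - 1) + a
    have h1 : a % 2 = 1 := Nat.odd_iff.1 (Nat.odd_iff.2 (by
      rw [Nat.even_iff] at hea; omega))
    have h2 : k % 2 = 1 := by rw [Nat.even_iff] at hek; omega
    have h3 : a * p ^ m % 2 = p ^ m % 2 := by rw [Nat.mul_mod, h1, one_mul]; exact Nat.mod_mod_of_dvd _ dvd_rfl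
    have hS_lt : p ^ m - r - 1 < p ^ m := by generalize p ^ m = M at hr_lt ⊢; omega
    have hSev : (p ^ m - r - 1) % 2 = 0 := by
      generalize p ^ m = M at hr_lt h3 hsar ⊢; omega
    have h4 : p * (p ^ m - r - 1) % 2 = 0 := by
      rw [Nat.mul_mod, hSev]; simp
    have hSc : ((p ^ m - r - 1 : ℕ) : ℝ) = (p : ℝ) ^ m - 1 - (r : ℝ) := by
      have h5 : p ^ m - r - 1 + (r + 1) = p ^ m := by generalize p ^ m = M at hr_lt ⊢; omega
      have h6 := congrArg (fun z : ℕ => (z : ℝ)) h5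
      push_cast at h6
      linarith
    have hk'o : (p * (p ^ m - r - 1) + a) % 2 = 1 := by omega
    refine ⟨p * (p ^ m - r - 1) + a, ?_, ?_, ?_, ?_⟩
    · calc p * (p ^ m - r - 1) + a < p * (p ^ m - r - 1) + p := by omega
        _ = p * (p ^ m - r - 1 + 1) := by ring
        _ ≤ p * p ^ m := Nat.mul_le_mul_left p (by generalize p ^ m = M at hr_lt ⊢; omega)
        _ = p ^ (m+1) := by ring
    · omega
    · have hek' : ¬ Even (p * (p ^ m - r - 1) + a) := by rw [Nat.even_iff]; omega
      rw [hgp, if_neg hea, Xp, Xp, if_neg hek, if_neg hek']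
      have hne : (p : ℝ) ^ (m+1) + 1 ≠ 0 := by linarith
      rw [eq_div_iff hne, sub_mul, mul_assoc, div_mul_cancel₀ _ hne]
      push_cast
      rw [hSc]
      linear_combination (- (p : ℝ)) * hcast
    · apply hfinal (p ^ m - r - 1) a hS_lt ea _ (by rw [hpik, if_neg hea])
      have : ¬ Odd (p ^ m - r - 1) := by rw [Nat.odd_iff]; omega
      rw [if_neg this]

lemma strictMonoOn_img_eq (N : ℕ) (f g : ℕ → ℝ)
    (hf : StrictMonoOn f (Set.Iio N)) (hg : StrictMonoOn g (Set.Iio N))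
    (h : f '' Set.Iio N = g '' Set.Iio N) : ∀ k, k < N → f k = g k := by
  intro k
  induction k using Nat.strong_induction_on with
  | _ k ih =>
    intro hk
    have hkN : k ∈ Set.Iio N := hk
    have h1 : f k ∈ g '' Set.Iio N := by rw [← h]; exact ⟨k, hkN, rfl⟩
    obtain ⟨j, hj, hje⟩ := h1
    have h2 : g k ∈ f '' Set.Iio N := by rw [h]; exact ⟨k, hkN, rfl⟩
    obtain ⟨i, hi, hie⟩ := h2
    have hkj : k ≤ j := by
      by_contra hlt
      push_neg at hlt
      have heq := ih j hlt (Set.mem_Iio.1 hj)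
      have hlt2 : f j < f k := hf hj hkN hlt
      rw [heq, hje] at hlt2
      exact lt_irrefl _ hlt2
    have e1 : g k ≤ f k := by
      rw [← hje]; exact hg.monotoneOn hkN hj hkj
    have hki : k ≤ i := by
      by_contra hlt
      push_neg at hlt
      have heq := ih i hlt (Set.mem_Iio.1 hi)
      have hlt2 : g i < g k := hg hi hkN hlt
      rw [← heq, hie] at hlt2
      exact lt_irrefl _ hlt2
    have e2 : f k ≤ g k := by
      rw [← hie]; exact hf.monotoneOn hkN hi hki
    linarith

lemma modeq_eq_of_mem (d a b : ℕ) (h : a ≡ b [MOD d])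
    (ha1 : 1 ≤ a) (had : a ≤ d) (hb1 : 1 ≤ b) (hbd : b ≤ d) : a = b := by
  have h' : a % d = b % d := h
  rcases eq_or_lt_of_le had with hA | hA <;> rcases eq_or_lt_of_le hbd with hB | hB
  · omega
  · rw [hA, Nat.mod_self, Nat.mod_eq_of_lt hB] at h'
    omega
  · rw [hB, Nat.mod_self, Nat.mod_eq_of_lt hA] at h'
    omega
  · rw [Nat.mod_eq_of_lt hA, Nat.mod_eq_of_lt hB] at h'
    exact h'

theorem bijection_B_alpha (p n : ℕ) [Fact p.Prime] (hn : 1 ≤ n)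
    (x : ℕ → ℝ) (hmono : StrictMonoOn x (Set.Iio (p ^ n)))
    (himg : x '' Set.Iio (p ^ n) = {y ∈ Set.Icc (0 : ℝ) 1 | (gp p)^[n] y = y})
    (α : (GaloisField p n)ˣ) (hα : ∀ β : (GaloisField p n)ˣ, β ∈ Subgroup.zpowers α)
    (B : ℝ → GaloisField p n) (hB0 : B (x 0) = 0)
    (hBk : ∀ k, 1 ≤ k → k < p ^ n → B (x k) = (α : GaloisField p n) ^ piPow p n k) :
    Set.BijOn B {y ∈ Set.Icc (0 : ℝ) 1 | (gp p)^[n] y = y} Set.univ ∧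
    ∀ k < p ^ n, B (x k) ^ p = B (gp p (x k)) := by
  have hp : 2 ≤ p := (Fact.out : p.Prime).two_le
  have hp1 : 1 ≤ p := by omega
  set N := p ^ n with hN
  have hN2 : 2 ≤ N := le_trans hp (Nat.le_self_pow (by omega) p)
  set S : Set ℝ := {y ∈ Set.Icc (0 : ℝ) 1 | (gp p)^[n] y = y} with hS
  -- step 1 : x agrees with Xp on Iio N
  have hXmono : StrictMonoOn (Xp p n) (Set.Iio N) :=
    fun i _ j hj hij => Xp_strictMono p n hp hn i j hij hj
  have hXinj : Set.InjOn (Xp p n) (Set.Iio N) := hXmono.injOn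
  have hxinj : Set.InjOn x (Set.Iio N) := hmono.injOn
  have hXsub : Xp p n '' Set.Iio N ⊆ S := by
    rintro y ⟨k, hk, rfl⟩
    exact ⟨Xp_Icc p n hp hn k hk, Xp_fixed p n hp hn k hk⟩
  have hSfin : S.Finite := by
    rw [← himg]
    exact (Set.finite_Iio N).image x
  have hIcard : (Set.Iio N).ncard = N := by
    rw [← Finset.coe_range, Set.ncard_coe_finset, Finset.card_range]
  have hXimg : Xp p n '' Set.Iio N = S := by
    apply Set.eq_of_subset_of_ncard_le hXsub _ hSfin
    rw [← himg, Set.ncard_image_of_injOn hxinj, Set.ncard_image_of_injOn hXinj, hIcard]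
  have hxX : ∀ k, k < N → x k = Xp p n k := by
    apply strictMonoOn_img_eq N x (Xp p n) hmono hXmono
    rw [himg, hXimg]
  -- step 2 : order of α
  have horder : orderOf α = N - 1 := by
    rw [orderOf_eq_card_of_forall_mem_zpowers hα, Nat.card_units,
      GaloisField.card p n (by omega)]
  have hdpos : 0 < N - 1 := by omega
  -- coercion helper
  have hval : ∀ i : ℕ, ((α ^ i : (GaloisField p n)ˣ) : GaloisField p n)
      = (α : GaloisField p n) ^ i := fun i => Units.val_pow_eq_pow_val α i
  have hkey : ∀ i j : ℕ, i ≡ j [MOD N - 1] →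
      (α : GaloisField p n) ^ i = (α : GaloisField p n) ^ j := by
    intro i j hij
    rw [← hval, ← hval]
    congr 1
    rw [pow_eq_pow_iff_modEq, horder]
    exact hij
  -- piPow bijectivity facts
  have hpi_lt : ∀ k, k < N → piPow p n k < N := fun k hk => piPow_lt p hp1 n k hk
  have hpi0 : piPow p n 0 = 0 := piPow_zero p n
  have hpi_inj : ∀ k l, k < N → l < N → piPow p n k = piPow p n l → k = l :=
    piPow_inj p hp1 n
  have hpi_pos : ∀ k, 1 ≤ k → k < N → 1 ≤ piPow p n k := by
    intro k hk1 hkN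
    by_contra hc
    push_neg at hc
    have : piPow p n k = 0 := by omega
    have := hpi_inj k 0 hkN (by omega) (by rw [this, hpi0])
    omega
  have hpi_surj : ∀ j, j < N → ∃ k, k < N ∧ piPow p n k = j := by
    intro j hj
    have hsub : Finset.image (piPow p n) (Finset.range N) ⊆ Finset.range N := by
      intro y hy
      rw [Finset.mem_image] at hy
      obtain ⟨k, hk, rfl⟩ := hy
      rw [Finset.mem_range] at hk ⊢
      exact hpi_lt k hk
    have hcard : Finset.range N ⊆ Finset.image (piPow p n) (Finset.range N) := by
      apply Finset.subset_of_eq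
      symm
      apply Finset.eq_of_subset_of_card_le hsub
      rw [Finset.card_image_of_injOn, Finset.card_range]
      intro u hu v hv huv
      exact hpi_inj u v (Finset.mem_range.1 hu) (Finset.mem_range.1 hv) huv
    have : j ∈ Finset.image (piPow p n) (Finset.range N) :=
      hcard (Finset.mem_range.2 hj)
    rw [Finset.mem_image] at this
    obtain ⟨k, hk, hke⟩ := this
    exact ⟨k, Finset.mem_range.1 hk, hke⟩
  -- B on x k values
  have hBne : ∀ k, 1 ≤ k → k < N → B (x k) ≠ 0 := by
    intro k h1 h2
    rw [hBk k h1 h2]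
    exact pow_ne_zero _ (Units.ne_zero α)
  constructor
  · -- bijectivity
    refine ⟨fun y _ => Set.mem_univ _, ?_, ?_⟩
    · -- InjOn
      intro y1 hy1 y2 hy2 hBe
      rw [← himg] at hy1 hy2
      obtain ⟨k, hk, rfl⟩ := hy1
      obtain ⟨l, hl, rfl⟩ := hy2
      rw [Set.mem_Iio] at hk hl
      rcases Nat.eq_zero_or_pos k with hk0 | hk1 <;> rcases Nat.eq_zero_or_pos l with hl0 | hl1
      · rw [hk0, hl0]
      · subst hk0
        rw [hB0] at hBe
        exact absurd hBe.symm (hBne l hl1 hl)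
      · subst hl0
        rw [hB0] at hBe
        exact absurd hBe (hBne k hk1 hk)
      · rw [hBk k hk1 hk, hBk l hl1 hl, ← hval, ← hval] at hBe
        have hBe' : α ^ piPow p n k = α ^ piPow p n l := Units.ext hBe
        rw [pow_eq_pow_iff_modEq, horder] at hBe'
        have := modeq_eq_of_mem (N - 1) _ _ hBe'
          (hpi_pos k hk1 hk) (by have := hpi_lt k hk; omega)
          (hpi_pos l hl1 hl) (by have := hpi_lt l hl; omega)
        rw [hpi_inj k l hk hl this]
    · -- SurjOn
      intro c _
      rcases eq_or_ne c 0 with rfl | hc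
      · refine ⟨x 0, ?_, hB0⟩
        rw [← himg]
        exact ⟨0, by simp [Set.mem_Iio]; omega, rfl⟩
      · obtain ⟨z, hz⟩ := Subgroup.mem_zpowers_iff.1 (hα (Units.mk0 c hc))
        set d : ℕ := N - 1 with hd
        have hdz : (0 : ℤ) < (d : ℤ) := by exact_mod_cast hdpos
        have hmod_nonneg : 0 ≤ z % (d : ℤ) := Int.emod_nonneg z (by omega)
        have hmod_lt : z % (d : ℤ) < (d : ℤ) := Int.emod_lt_of_pos z hdz
        set j : ℕ := (z % (d : ℤ)).toNat with hj
        have hjlt : j < d := by omega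
        have hαj : α ^ j = Units.mk0 c hc := by
          rw [← hz, ← zpow_natCast]
          rw [hj, Int.toNat_of_nonneg hmod_nonneg]
          rw [← horder] at *
          exact zpow_mod_orderOf α z
        set j' : ℕ := if j = 0 then d else j with hj'
        have hj'1 : 1 ≤ j' := by rw [hj']; split <;> omega
        have hj'd : j' ≤ d := by rw [hj']; split <;> omega
        have hαj' : α ^ j' = α ^ j := by
          rw [pow_eq_pow_iff_modEq, horder]
          rw [hj']
          split
          · rename_i h0
            rw [h0]
            show d % d = 0 % d
            simp
          · rfl
        obtain ⟨k, hkN, hπk⟩ := hpi_surj j' (by omega)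
        have hk1 : 1 ≤ k := by
          by_contra hcon
          push_neg at hcon
          have : k = 0 := by omega
          rw [this, hpi0] at hπk
          omega
        refine ⟨x k, ?_, ?_⟩
        · rw [← himg]; exact ⟨k, hkN, rfl⟩
        · rw [hBk k hk1 hkN, hπk, ← hval, hαj', hαj]
          rfl
  · -- the Frobenius equation
    intro k hkN
    obtain ⟨k', hk'N, hk'0, hgpe, hmodeq⟩ := gp_action p n hp hn k hkN
    rcases Nat.eq_zero_or_pos k with rfl | hk1
    · have hk'z : k' = 0 := hk'0.2 rfl
      subst hk'z
      rw [hB0, hxX 0 (by omega), hgpe, ← hxX 0 (by omega), hB0]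
      exact zero_pow (by omega)
    · have hk'1 : 1 ≤ k' := by
        rcases Nat.eq_zero_or_pos k' with h0 | h1
        · exact absurd (hk'0.1 h0) (by omega)
        · exact h1
      rw [hBk k hk1 hkN, hxX k hkN, hgpe, ← hxX k' hk'N, hBk k' hk'1 hk'N]
      rw [← pow_mul]
      apply hkey
      rw [mul_comm]
      exact hmodeq
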